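/- Let q : [0,T] → R^d solve the Fokker–Planck ODE q̇_t^i = ∑_j q_t^j α_t^{j,i} with q_0 in the simplex S_d, where the measurable controls satisfy α_t^{i,j} ≥ 0 for i ≠ j, α_t^{i,i} = −∑_{j≠i} α_t^{i,j}, and |α_t^{i,j}| ≤ M for i ≠ j. Then q_t remains in S_d for all t ∈ [0,T], and moreover q_t^i ≥ q_0^i e^{−t M (d−1)} for every i and t. -/

import Mathlib

open Set MeasureTheory intervalIntegral

set_option maxHeartbeats 1000000 in
/-- solutions of the Fokker–Planck ODE `q̇ᵗⁱ = ∑ⱼ qᵗʲ αᵗʲⁱ` (in integral form),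
driven by bounded measurable Markovian controls (`α^{i,j} ≥ 0` for `i ≠ j`,
`α^{i,i} = −∑_{j≠i} α^{i,j}`, `|α^{i,j}| ≤ M` for `i ≠ j`), starting in the simplex,
remain in the simplex on `[0,T]` and satisfy the lower bound
`q_t^i ≥ q_0^i e^{−t M (d−1)}`. -/
theorem fokker_planck_stays_in_simplex
    (d : ℕ) (hd : 2 ≤ d) (T : ℝ) (hT : 0 < T) (M : ℝ) (hM : 0 ≤ M)
    (q : ℝ → Fin d → ℝ) (α : ℝ → Fin d → Fin d → ℝ)
    (hαmeas : ∀ i j, Measurable (fun t => α t i j))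
    (hαpos : ∀ t ∈ Set.Icc (0:ℝ) T, ∀ i j, i ≠ j → 0 ≤ α t i j)
    (hαbd : ∀ t ∈ Set.Icc (0:ℝ) T, ∀ i j, i ≠ j → |α t i j| ≤ M)
    (hαdiag : ∀ t ∈ Set.Icc (0:ℝ) T, ∀ i, α t i i = -∑ j ∈ Finset.univ.erase i, α t i j)
    (hq0pos : ∀ i, 0 ≤ q 0 i) (hq0sum : ∑ i, q 0 i = 1)
    (hqcont : ContinuousOn q (Set.Icc (0:ℝ) T))
    (heq : ∀ t ∈ Set.Icc (0:ℝ) T, ∀ i,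
      q t i = q 0 i + ∫ s in (0:ℝ)..t, ∑ j, q s j * α s j i) :
    ∀ t ∈ Set.Icc (0:ℝ) T,
      (∀ i, 0 ≤ q t i) ∧ (∑ i, q t i = 1) ∧
      (∀ i, q 0 i * Real.exp (-(t * M * ((d : ℝ) - 1))) ≤ q t i) := by
  set l : ℝ := M * ((d : ℝ) - 1) with hl
  have h0T : (0:ℝ) ∈ Set.Icc (0:ℝ) T := ⟨le_refl _, hT.le⟩
  have hd1 : (1 : ℝ) ≤ (d : ℝ) - 1 := by
    have : (2 : ℝ) ≤ (d : ℝ) := by exact_mod_cast hd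
    linarith
  have hl0 : 0 ≤ l := mul_nonneg hM (by linarith)
  have hcard : ∀ i : Fin d, ((Finset.univ.erase i).card : ℝ) = (d : ℝ) - 1 := by
    intro i
    rw [Finset.card_erase_of_mem (Finset.mem_univ i)]
    simp only [Finset.card_univ, Fintype.card_fin]
    have h1 : 1 ≤ d := by omega
    push_cast [Nat.cast_sub h1]
    ring
  -- diagonal bounds
  have hαii_le : ∀ t ∈ Set.Icc (0:ℝ) T, ∀ i, α t i i ≤ 0 := by
    intro t ht i
    rw [hαdiag t ht i]
    simp only [neg_nonpos]
    exact Finset.sum_nonneg fun j hj => hαpos t ht i j (Finset.ne_of_mem_erase hj).symm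
  have hαii_ge : ∀ t ∈ Set.Icc (0:ℝ) T, ∀ i, -l ≤ α t i i := by
    intro t ht i
    rw [hαdiag t ht i, neg_le_neg_iff]
    calc ∑ j ∈ Finset.univ.erase i, α t i j
        ≤ ∑ _j ∈ Finset.univ.erase i, M := by
          refine Finset.sum_le_sum fun j hj => ?_
          exact (abs_le.mp (hαbd t ht i j (Finset.ne_of_mem_erase hj).symm)).2
      _ = l := by rw [Finset.sum_const, nsmul_eq_mul, hcard, hl, mul_comm]
  have hαabs : ∀ t ∈ Set.Icc (0:ℝ) T, ∀ i j, |α t i j| ≤ l := by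
    intro t ht i j
    rcases eq_or_ne i j with rfl | hij
    · rw [abs_le]
      exact ⟨hαii_ge t ht i, (hαii_le t ht i).trans (by positivity)⟩
    · refine (hαbd t ht i j hij).trans ?_
      nlinarith [abs_nonneg (α t i j), (abs_le.mp (hαbd t ht i j hij)).1]
  -- continuity of components
  have hqc : ∀ j : Fin d, ContinuousOn (fun s => q s j) (Set.Icc (0:ℝ) T) :=
    fun j => (continuous_apply j).comp_continuousOn hqcont
  -- bound on q
  obtain ⟨K, hK⟩ : ∃ K, ∀ s ∈ Set.Icc (0:ℝ) T, ‖q s‖ ≤ K :=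
    isCompact_Icc.exists_bound_of_continuousOn hqcont
  have hKq : ∀ s ∈ Set.Icc (0:ℝ) T, ∀ j, |q s j| ≤ K := by
    intro s hs j
    exact (norm_le_pi_norm (q s) j).trans (hK s hs)
  -- integrability
  have hFint : ∀ (i : Fin d) (a b : ℝ), a ∈ Set.Icc (0:ℝ) T → b ∈ Set.Icc (0:ℝ) T →
      IntervalIntegrable (fun s => ∑ j, q s j * α s j i) volume a b := by
    intro i a b ha hb
    have hsub : Set.uIcc a b ⊆ Set.Icc (0:ℝ) T := Set.uIcc_subset_Icc ha hb
    refine MeasureTheory.IntegrableOn.intervalIntegrable ?_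
    refine MeasureTheory.integrable_finset_sum _ fun j _ => ?_
    refine MeasureTheory.Integrable.mono' (g := fun _ => K * l)
      (integrableOn_const isCompact_uIcc.measure_lt_top.ne) ?_ ?_
    · exact (((hqc j).mono hsub).aestronglyMeasurable measurableSet_uIcc).mul
        ((hαmeas j i).aestronglyMeasurable.restrict)
    · refine (ae_restrict_iff' measurableSet_uIcc).mpr (Filter.Eventually.of_forall ?_)
      intro s hs
      have hs' := hsub hs
      rw [Real.norm_eq_abs, abs_mul]
      exact mul_le_mul (hKq s hs' j) (hαabs s hs' j i) (abs_nonneg _)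
        ((abs_nonneg (q s j)).trans (hKq s hs' j))
  -- increments
  have hdiff : ∀ a ∈ Set.Icc (0:ℝ) T, ∀ b ∈ Set.Icc (0:ℝ) T, ∀ i,
      q b i - q a i = ∫ s in a..b, ∑ j, q s j * α s j i := by
    intro a ha b hb i
    rw [heq b hb i, heq a ha i]
    have := intervalIntegral.integral_interval_sub_left (hFint i 0 b h0T hb) (hFint i 0 a h0T ha)
    linarith [this]
  -- ===== positivity =====
  have key1 : ∀ ε : ℝ, 0 < ε → ∀ t ∈ Set.Icc (0:ℝ) T, ∀ i,
      ¬ (q t i ≤ -ε * Real.exp (l * t)) := by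
    intro ε hε
    by_contra hcon
    push_neg at hcon
    obtain ⟨t₀, ht₀, i₀, hi₀⟩ := hcon
    set B : Set ℝ := {t ∈ Set.Icc (0:ℝ) T | ∃ i, q t i ≤ -ε * Real.exp (l * t)} with hB
    have hBne : B.Nonempty := ⟨t₀, ht₀, i₀, hi₀⟩
    have hBsub : B ⊆ Set.Icc 0 T := fun x hx => hx.1
    have hBbdd : BddBelow B := BddBelow.mono hBsub bddBelow_Icc
    have hBclosed : IsClosed B := by
      have hrw : B = ⋃ i : Fin d,
          (Set.Icc (0:ℝ) T ∩ (fun t => q t i + ε * Real.exp (l * t)) ⁻¹' Set.Iic 0) := by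
        ext t
        simp only [hB, Set.mem_setOf_eq, Set.mem_iUnion, Set.mem_inter_iff, Set.mem_preimage,
          Set.mem_Iic]
        constructor
        · rintro ⟨h1, i, h2⟩; exact ⟨i, h1, by linarith⟩
        · rintro ⟨i, h1, h2⟩; exact ⟨h1, i, by linarith⟩
      rw [hrw]
      refine isClosed_iUnion_of_finite fun i => ?_
      refine ContinuousOn.preimage_isClosed_of_isClosed ?_ isClosed_Icc isClosed_Iic
      exact (hqc i).add (Continuous.continuousOn (by fun_prop))
    set τ := sInf B with hτdef
    have hτB : τ ∈ B := hBclosed.csInf_mem hBne hBbdd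
    obtain ⟨hτIcc, i, hτi⟩ := hτB
    set A : Set ℝ := {s ∈ Set.Icc (0:ℝ) τ | 0 ≤ q s i} with hA
    have hAne : A.Nonempty := ⟨0, ⟨le_refl _, hτIcc.1⟩, hq0pos i⟩
    have hAsub : A ⊆ Set.Icc 0 τ := fun x hx => hx.1
    have hAbdd : BddAbove A := BddAbove.mono hAsub bddAbove_Icc
    have hIccsub : Set.Icc (0:ℝ) τ ⊆ Set.Icc 0 T := Set.Icc_subset_Icc_right hτIcc.2
    have hAclosed : IsClosed A := by
      have hrw : A = Set.Icc (0:ℝ) τ ∩ (fun s => q s i) ⁻¹' Set.Ici 0 := rfl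
      rw [hrw]
      exact ContinuousOn.preimage_isClosed_of_isClosed ((hqc i).mono hIccsub)
        isClosed_Icc isClosed_Ici
    set σ := sSup A with hσdef
    have hσA : σ ∈ A := hAclosed.csSup_mem hAne hAbdd
    obtain ⟨⟨hσ0, hστ⟩, hσq⟩ := hσA
    have hσIcc : σ ∈ Set.Icc (0:ℝ) T := hIccsub ⟨hσ0, hστ⟩
    have hστlt : σ < τ := by
      rcases lt_or_eq_of_le hστ with h | h
      · exact h
      · exfalso
        rw [h] at hσq
        nlinarith [Real.exp_pos (l * τ)]
    -- pointwise bound on the open interval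
    have hIoo : ∀ s ∈ Set.Ioo σ τ,
        -(l * ε) * Real.exp (l * s) ≤ ∑ j, q s j * α s j i := by
      intro s hs
      have hsIcc : s ∈ Set.Icc (0:ℝ) T := ⟨hσ0.trans hs.1.le, hs.2.le.trans hτIcc.2⟩
      have hsB : s ∉ B := fun hmem => absurd (csInf_le hBbdd hmem) (not_le.mpr hs.2)
      have hqj : ∀ j, -ε * Real.exp (l * s) ≤ q s j := by
        intro j
        by_contra h
        exact hsB ⟨hsIcc, j, (not_le.mp h).le⟩
      have hsA : s ∉ A := fun hmem => absurd (le_csSup hAbdd hmem) (not_le.mpr hs.1)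
      have hqi : q s i ≤ 0 := by
        by_contra h
        exact hsA ⟨⟨hσ0.trans hs.1.le, hs.2.le⟩, (not_le.mp h).le⟩
      rw [← Finset.add_sum_erase Finset.univ (fun j => q s j * α s j i) (Finset.mem_univ i)]
      have h1 : 0 ≤ q s i * α s i i := by
        nlinarith [mul_nonneg (neg_nonneg.mpr hqi) (neg_nonneg.mpr (hαii_le s hsIcc i))]
      have h2 : ((Finset.univ.erase i).card) • (-ε * Real.exp (l * s) * M) ≤
          ∑ j ∈ Finset.univ.erase i, q s j * α s j i := by
        refine Finset.card_nsmul_le_sum _ _ _ fun j hj => ?_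
        have hji : j ≠ i := Finset.ne_of_mem_erase hj
        have ha1 : 0 ≤ α s j i := hαpos s hsIcc j i hji
        have ha2 : α s j i ≤ M := (abs_le.mp (hαbd s hsIcc j i hji)).2
        nlinarith [hqj j, Real.exp_pos (l * s),
          mul_le_mul_of_nonneg_right (hqj j) ha1,
          mul_nonneg (mul_nonneg hε.le (Real.exp_pos (l * s)).le) (sub_nonneg.mpr ha2)]
      rw [nsmul_eq_mul, hcard] at h2
      have h3 : ((d : ℝ) - 1) * (-ε * Real.exp (l * s) * M) = -(l * ε) * Real.exp (l * s) := by
        rw [hl]; ring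
      linarith [h1, h2, h3 ▸ h2]
    -- integral comparison
    have hint1 : IntervalIntegrable (fun s => -(l * ε) * Real.exp (l * s)) volume σ τ :=
      Continuous.intervalIntegrable (by fun_prop) σ τ
    have hint2 := hFint i σ τ hσIcc hτIcc
    have hmono : ∫ s in σ..τ, -(l * ε) * Real.exp (l * s)
        ≤ ∫ s in σ..τ, ∑ j, q s j * α s j i := by
      refine intervalIntegral.integral_mono_ae_restrict hστlt.le hint1 hint2 ?_
      have hmem : ∀ᵐ s ∂(volume.restrict (Set.Icc σ τ)), s ∈ Set.Icc σ τ :=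
        ae_restrict_mem measurableSet_Icc
      have hends : ∀ᵐ s ∂(volume.restrict (Set.Icc σ τ)), s ∉ ({σ, τ} : Set ℝ) := by
        refine ae_restrict_of_ae ?_
        rw [← measure_eq_zero_iff_ae_notMem]
        exact Set.Finite.measure_zero ((Set.finite_singleton τ).insert σ) volume
      filter_upwards [hmem, hends] with s hs1 hs2
      simp only [Set.mem_insert_iff, Set.mem_singleton_iff, not_or] at hs2
      exact hIoo s ⟨lt_of_le_of_ne hs1.1 (Ne.symm hs2.1), lt_of_le_of_ne hs1.2 hs2.2⟩
    have hFTC : ∫ s in σ..τ, -(l * ε) * Real.exp (l * s)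
        = (-ε * Real.exp (l * τ)) - (-ε * Real.exp (l * σ)) := by
      refine intervalIntegral.integral_eq_sub_of_hasDerivAt
        (f := fun s => -ε * Real.exp (l * s)) (fun x _ => ?_) hint1
      have h := (((hasDerivAt_id x).const_mul l).exp).const_mul (-ε)
      simp only [id_eq, mul_one] at h
      refine h.congr_deriv ?_
      ring
    rw [hFTC] at hmono
    have hqd := hdiff σ hσIcc τ hτIcc i
    nlinarith [mul_pos hε (Real.exp_pos (l * σ))]
  have hpos : ∀ t ∈ Set.Icc (0:ℝ) T, ∀ i, 0 ≤ q t i := by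
    intro t ht i
    by_contra h
    push_neg at h
    have hε : 0 < -q t i / Real.exp (l * t) := div_pos (by linarith) (Real.exp_pos _)
    refine key1 _ hε t ht i ?_
    have hne : Real.exp (l * t) ≠ 0 := (Real.exp_pos _).ne'
    field_simp
    exact le_rfl
  -- ===== lower bound =====
  have key2 : ∀ i : Fin d, ∀ δ : ℝ, 0 < δ → ∀ u ∈ Set.Icc (0:ℝ) T,
      ¬ (q u i ≤ (q 0 i - δ) * Real.exp (-(l * u))) := by
    intro i δ hδ
    by_contra hcon
    push_neg at hcon
    obtain ⟨t₀, ht₀, hi₀⟩ := hcon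
    set B : Set ℝ := {u ∈ Set.Icc (0:ℝ) T | q u i ≤ (q 0 i - δ) * Real.exp (-(l * u))} with hB
    have hBne : B.Nonempty := ⟨t₀, ht₀, hi₀⟩
    have hBsub : B ⊆ Set.Icc 0 T := fun x hx => hx.1
    have hBbdd : BddBelow B := BddBelow.mono hBsub bddBelow_Icc
    have hBclosed : IsClosed B := by
      have hrw : B = Set.Icc (0:ℝ) T ∩
          (fun u => q u i - (q 0 i - δ) * Real.exp (-(l * u))) ⁻¹' Set.Iic 0 := by
        ext u
        simp only [hB, Set.mem_setOf_eq, Set.mem_inter_iff, Set.mem_preimage, Set.mem_Iic]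
        constructor
        · rintro ⟨h1, h2⟩; exact ⟨h1, by linarith⟩
        · rintro ⟨h1, h2⟩; exact ⟨h1, by linarith⟩
      rw [hrw]
      refine ContinuousOn.preimage_isClosed_of_isClosed ?_ isClosed_Icc isClosed_Iic
      exact (hqc i).sub (Continuous.continuousOn (by fun_prop))
    set τ := sInf B with hτdef
    have hτB : τ ∈ B := hBclosed.csInf_mem hBne hBbdd
    obtain ⟨hτIcc, hτi⟩ := hτB
    set A : Set ℝ := {s ∈ Set.Icc (0:ℝ) τ | q 0 i * Real.exp (-(l * s)) ≤ q s i} with hA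
    have hAne : A.Nonempty := ⟨0, ⟨le_refl _, hτIcc.1⟩, by simp⟩
    have hAsub : A ⊆ Set.Icc 0 τ := fun x hx => hx.1
    have hAbdd : BddAbove A := BddAbove.mono hAsub bddAbove_Icc
    have hIccsub : Set.Icc (0:ℝ) τ ⊆ Set.Icc 0 T := Set.Icc_subset_Icc_right hτIcc.2
    have hAclosed : IsClosed A := by
      have hrw : A = Set.Icc (0:ℝ) τ ∩
          (fun s => q 0 i * Real.exp (-(l * s)) - q s i) ⁻¹' Set.Iic 0 := by
        ext u
        simp only [hA, Set.mem_setOf_eq, Set.mem_inter_iff, Set.mem_preimage, Set.mem_Iic]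
        constructor
        · rintro ⟨h1, h2⟩; exact ⟨h1, by linarith⟩
        · rintro ⟨h1, h2⟩; exact ⟨h1, by linarith⟩
      rw [hrw]
      refine ContinuousOn.preimage_isClosed_of_isClosed ?_ isClosed_Icc isClosed_Iic
      exact (Continuous.continuousOn (by fun_prop)).sub ((hqc i).mono hIccsub)
    set σ := sSup A with hσdef
    have hσA : σ ∈ A := hAclosed.csSup_mem hAne hAbdd
    obtain ⟨⟨hσ0, hστ⟩, hσq⟩ := hσA
    have hσIcc : σ ∈ Set.Icc (0:ℝ) T := hIccsub ⟨hσ0, hστ⟩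
    have hστlt : σ < τ := by
      rcases lt_or_eq_of_le hστ with h | h
      · exact h
      · exfalso
        rw [h] at hσq
        nlinarith [Real.exp_pos (-(l * τ))]
    have hIoo : ∀ s ∈ Set.Ioo σ τ,
        -(l * q 0 i) * Real.exp (-(l * s)) ≤ ∑ j, q s j * α s j i := by
      intro s hs
      have hsIcc : s ∈ Set.Icc (0:ℝ) T := ⟨hσ0.trans hs.1.le, hs.2.le.trans hτIcc.2⟩
      have hsA : s ∉ A := fun hmem => absurd (le_csSup hAbdd hmem) (not_le.mpr hs.1)
      have hqic : q s i ≤ q 0 i * Real.exp (-(l * s)) := by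
        by_contra h
        exact hsA ⟨⟨hσ0.trans hs.1.le, hs.2.le⟩, (not_le.mp h).le⟩
      rw [← Finset.add_sum_erase Finset.univ (fun j => q s j * α s j i) (Finset.mem_univ i)]
      have h2 : 0 ≤ ∑ j ∈ Finset.univ.erase i, q s j * α s j i :=
        Finset.sum_nonneg fun j hj =>
          mul_nonneg (hpos s hsIcc j) (hαpos s hsIcc j i (Finset.ne_of_mem_erase hj))
      have h1 : -l * q s i ≤ q s i * α s i i := by
        have := mul_le_mul_of_nonneg_left (hαii_ge s hsIcc i) (hpos s hsIcc i)
        linarith [this]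
      have h3 : l * q s i ≤ l * (q 0 i * Real.exp (-(l * s))) :=
        mul_le_mul_of_nonneg_left hqic hl0
      linarith [h1, h2, h3]
    have hint1 : IntervalIntegrable (fun s => -(l * q 0 i) * Real.exp (-(l * s))) volume σ τ :=
      Continuous.intervalIntegrable (by fun_prop) σ τ
    have hint2 := hFint i σ τ hσIcc hτIcc
    have hmono : ∫ s in σ..τ, -(l * q 0 i) * Real.exp (-(l * s))
        ≤ ∫ s in σ..τ, ∑ j, q s j * α s j i := by
      refine intervalIntegral.integral_mono_ae_restrict hστlt.le hint1 hint2 ?_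
      have hmem : ∀ᵐ s ∂(volume.restrict (Set.Icc σ τ)), s ∈ Set.Icc σ τ :=
        ae_restrict_mem measurableSet_Icc
      have hends : ∀ᵐ s ∂(volume.restrict (Set.Icc σ τ)), s ∉ ({σ, τ} : Set ℝ) := by
        refine ae_restrict_of_ae ?_
        rw [← measure_eq_zero_iff_ae_notMem]
        exact Set.Finite.measure_zero ((Set.finite_singleton τ).insert σ) volume
      filter_upwards [hmem, hends] with s hs1 hs2
      simp only [Set.mem_insert_iff, Set.mem_singleton_iff, not_or] at hs2
      exact hIoo s ⟨lt_of_le_of_ne hs1.1 (Ne.symm hs2.1), lt_of_le_of_ne hs1.2 hs2.2⟩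
    have hFTC : ∫ s in σ..τ, -(l * q 0 i) * Real.exp (-(l * s))
        = (q 0 i * Real.exp (-(l * τ))) - (q 0 i * Real.exp (-(l * σ))) := by
      refine intervalIntegral.integral_eq_sub_of_hasDerivAt
        (f := fun s => q 0 i * Real.exp (-(l * s))) (fun x _ => ?_) hint1
      have h := ((((hasDerivAt_id x).const_mul l).neg).exp).const_mul (q 0 i)
      simp only [id_eq, mul_one, Pi.neg_apply] at h
      refine h.congr_deriv ?_
      ring
    rw [hFTC] at hmono
    have hqd := hdiff σ hσIcc τ hτIcc i
    nlinarith [mul_pos hδ (Real.exp_pos (-(l * τ)))]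
  have hlow : ∀ t ∈ Set.Icc (0:ℝ) T, ∀ i, q 0 i * Real.exp (-(l * t)) ≤ q t i := by
    intro t ht i
    by_contra h
    push_neg at h
    have hδ : 0 < (q 0 i * Real.exp (-(l * t)) - q t i) * Real.exp (l * t) :=
      mul_pos (by linarith) (Real.exp_pos _)
    refine key2 i _ hδ t ht ?_
    have heq2 : (q 0 i - (q 0 i * Real.exp (-(l * t)) - q t i) * Real.exp (l * t))
        * Real.exp (-(l * t)) = q t i := by
      rw [Real.exp_neg]
      field_simp
      ring
    exact le_of_eq heq2.symm
  -- ===== sum = 1 =====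
  have hsum : ∀ t ∈ Set.Icc (0:ℝ) T, ∑ i, q t i = 1 := by
    intro t ht
    have hint : ∀ i : Fin d, IntervalIntegrable (fun s => ∑ j, q s j * α s j i) volume 0 t :=
      fun i => hFint i 0 t h0T ht
    calc ∑ i, q t i = ∑ i, (q 0 i + ∫ s in (0:ℝ)..t, ∑ j, q s j * α s j i) :=
          Finset.sum_congr rfl fun i _ => heq t ht i
      _ = 1 + ∑ i, ∫ s in (0:ℝ)..t, ∑ j, q s j * α s j i := by
          rw [Finset.sum_add_distrib, hq0sum]
      _ = 1 + ∫ s in (0:ℝ)..t, ∑ i, ∑ j, q s j * α s j i := by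
          rw [intervalIntegral.integral_finset_sum (fun i _ => hint i)]
      _ = 1 + ∫ s in (0:ℝ)..t, (0:ℝ) := by
          congr 1
          refine intervalIntegral.integral_congr fun s hs => ?_
          have hsIcc : s ∈ Set.Icc (0:ℝ) T := by
            rw [Set.uIcc_of_le ht.1] at hs
            exact ⟨hs.1, hs.2.trans ht.2⟩
          rw [Finset.sum_comm]
          refine Finset.sum_eq_zero fun j _ => ?_
          rw [← Finset.mul_sum]
          have hz : ∑ k : Fin d, α s j k = 0 := by
            rw [← Finset.add_sum_erase Finset.univ _ (Finset.mem_univ j), hαdiag s hsIcc j]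
            ring
          rw [hz, mul_zero]
      _ = 1 := by simp
  -- conclusion
  intro t ht
  refine ⟨fun i => hpos t ht i, hsum t ht, fun i => ?_⟩
  have he : -(t * M * ((d : ℝ) - 1)) = -(l * t) := by rw [hl]; ring
  rw [he]
  exact hlow t ht i
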